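/- Let y = Xβ₀ + ε with ε ∼ N(0, σ²I_n), X ∈ ℝ^{n×p} deterministic, and Σ_n = XᵀX/n with column normalization ‖X_j‖₂² = n. Let β̂_L be a Lasso solution with parameter λ_L > 0 and let E be its equicorrelation set. Then P(E = ∅) ≤ Φ((λ_L − ‖Σ_n β₀‖_∞)/(σ/√n)), where Φ is the standard normal CDF. -/

import Mathlib

open Matrix MeasureTheory ProbabilityTheory

open Real
open scoped NNReal ENNReal

lemma aux_exp {v1 v2 : ℝ} (h1 : 0 < v1) (h2 : 0 < v2) (z x : ℝ) :
    -(x-0)^2/(2*v1) + -(z-x-0)^2/(2*v2)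
      = -((v1+v2)/(2*v1*v2)) * (x - z*v1/(v1+v2))^2 + -(z-0)^2/(2*(v1+v2)) := by
  have hV : v1 + v2 ≠ 0 := by positivity
  field_simp
  ring

lemma gauss_conv_integrable (v1 v2 : ℝ≥0) (h1 : v1 ≠ 0) (h2 : v2 ≠ 0) (z : ℝ) :
    Integrable (fun x => gaussianPDFReal 0 v1 x * gaussianPDFReal 0 v2 (z - x)) := by
  have h1' : (0:ℝ) < v1 := lt_of_le_of_ne (v1.coe_nonneg) (by exact_mod_cast (Ne.symm h1))
  have h2' : (0:ℝ) < v2 := lt_of_le_of_ne (v2.coe_nonneg) (by exact_mod_cast (Ne.symm h2))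
  set V : ℝ := (v1:ℝ) + v2 with hVdef
  have hV : 0 < V := by positivity
  set a : ℝ := V/(2*v1*v2) with hadef
  have ha : 0 < a := by positivity
  set b : ℝ := z*v1/V with hbdef
  set C : ℝ := (√(2*π*v1))⁻¹ * (√(2*π*v2))⁻¹ * rexp (-(z-0)^2/(2*V)) with hCdef
  have key : ∀ x, gaussianPDFReal 0 v1 x * gaussianPDFReal 0 v2 (z - x)
      = C * rexp (-a * (x - b)^2) := by
    intro x
    simp only [gaussianPDFReal, hCdef]
    rw [show (√(2*π*v1))⁻¹ * rexp (-(x-0)^2/(2*v1)) * ((√(2*π*v2))⁻¹ * rexp (-(z-x-0)^2/(2*v2)))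
        = (√(2*π*v1))⁻¹ * (√(2*π*v2))⁻¹ * (rexp (-(x-0)^2/(2*v1)) * rexp (-(z-x-0)^2/(2*v2))) by ring,
      ← Real.exp_add, aux_exp h1' h2' z x, Real.exp_add]
    ring
  refine (((integrable_exp_neg_mul_sq ha).comp_sub_right b).const_mul C).congr ?_
  filter_upwards with x
  exact (key x).symm

lemma gauss_conv_pdf (v1 v2 : ℝ≥0) (h1 : v1 ≠ 0) (h2 : v2 ≠ 0) (z : ℝ) :
    (∫ x, gaussianPDFReal 0 v1 x * gaussianPDFReal 0 v2 (z - x))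
      = gaussianPDFReal 0 (v1+v2) z := by
  have h1' : (0:ℝ) < v1 := lt_of_le_of_ne (v1.coe_nonneg) (by exact_mod_cast (Ne.symm h1))
  have h2' : (0:ℝ) < v2 := lt_of_le_of_ne (v2.coe_nonneg) (by exact_mod_cast (Ne.symm h2))
  set V : ℝ := (v1:ℝ) + v2 with hVdef
  have hV : 0 < V := by positivity
  set a : ℝ := V/(2*v1*v2) with hadef
  have ha : 0 < a := by positivity
  set b : ℝ := z*v1/V with hbdef
  set C : ℝ := (√(2*π*v1))⁻¹ * (√(2*π*v2))⁻¹ * rexp (-(z-0)^2/(2*V)) with hCdef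
  have key : ∀ x, gaussianPDFReal 0 v1 x * gaussianPDFReal 0 v2 (z - x)
      = C * rexp (-a * (x - b)^2) := by
    intro x
    simp only [gaussianPDFReal, hCdef]
    rw [show (√(2*π*v1))⁻¹ * rexp (-(x-0)^2/(2*v1)) * ((√(2*π*v2))⁻¹ * rexp (-(z-x-0)^2/(2*v2)))
        = (√(2*π*v1))⁻¹ * (√(2*π*v2))⁻¹ * (rexp (-(x-0)^2/(2*v1)) * rexp (-(z-x-0)^2/(2*v2))) by ring,
      ← Real.exp_add, aux_exp h1' h2' z x, Real.exp_add]
    ring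
  simp only [key]
  rw [integral_const_mul]
  have : (∫ x, rexp (-a * (x - b)^2)) = ∫ x, rexp (-a * x^2) := by
    exact integral_sub_right_eq_self (fun x => rexp (-a * x^2)) b
  rw [this, integral_gaussian]
  have hsq : √(2*π*v1) * √(2*π*v2) = √(2*π*V) * √(π/a) := by
    rw [← Real.sqrt_mul (by positivity), ← Real.sqrt_mul (by positivity)]
    congr 1
    rw [hadef]
    field_simp
  have hs1 : (0:ℝ) < √(2*π*v1) := Real.sqrt_pos.2 (by positivity)
  have hs2 : (0:ℝ) < √(2*π*v2) := Real.sqrt_pos.2 (by positivity)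
  have hs3 : (0:ℝ) < √(2*π*V) := Real.sqrt_pos.2 (by positivity)
  have hs4 : (0:ℝ) < √(π/a) := Real.sqrt_pos.2 (by positivity)
  have h5 : (√(2*π*v1))⁻¹ * (√(2*π*v2))⁻¹ = (√(2*π*V))⁻¹ * (√(π/a))⁻¹ := by
    rw [← mul_inv, ← mul_inv, hsq]
  have habs : ∀ (A B E : ℝ), B ≠ 0 → (A⁻¹ * B⁻¹ * E) * B = A⁻¹ * E := by
    intro A B E hB; rw [mul_right_comm A⁻¹ B⁻¹ E, mul_assoc, inv_mul_cancel₀ hB, mul_one]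
  have hC : C * √(π/a) = (√(2*π*V))⁻¹ * rexp (-(z-0)^2/(2*V)) := by
    rw [hCdef, h5]; exact habs _ _ _ hs4.ne'
  rw [hC]
  simp only [gaussianPDFReal, hVdef]
  push_cast
  ring_nf

lemma gaussianReal_conv_gaussianReal (v1 v2 : ℝ≥0) :
    Measure.conv (gaussianReal 0 v1) (gaussianReal 0 v2) = gaussianReal 0 (v1 + v2) := by
  by_cases h1 : v1 = 0
  · subst h1; rw [gaussianReal_zero_var, zero_add]; exact Measure.dirac_zero_conv _
  by_cases h2 : v2 = 0
  · subst h2; rw [gaussianReal_zero_var, add_zero]; exact Measure.conv_dirac_zero _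
  have hV : v1 + v2 ≠ 0 := by simp [h1]
  set f := gaussianPDF 0 v1 with hf
  set g := gaussianPDF 0 v2 with hg
  have hfm : Measurable f := measurable_gaussianPDF 0 v1
  have hgm : Measurable g := measurable_gaussianPDF 0 v2
  rw [gaussianReal_of_var_ne_zero _ h1, gaussianReal_of_var_ne_zero _ h2,
      gaussianReal_of_var_ne_zero _ hV]
  ext s hs
  rw [Measure.conv, Measure.map_apply measurable_add hs,
      Measure.prod_apply (measurable_add hs), withDensity_apply _ hs]
  have step1 : ∀ x : ℝ, (volume.withDensity g) (Prod.mk x ⁻¹' ((fun p : ℝ × ℝ => p.1 + p.2) ⁻¹' s))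
      = ∫⁻ z, s.indicator (fun w => g (w - x)) z := by
    intro x
    have hA : MeasurableSet (Prod.mk x ⁻¹' ((fun p : ℝ × ℝ => p.1 + p.2) ⁻¹' s)) :=
      measurable_prodMk_left (measurable_add hs)
    rw [withDensity_apply _ hA, ← lintegral_indicator hA _,
      ← lintegral_add_left_eq_self (fun z => s.indicator (fun w => g (w - x)) z) x]
    congr 1 with y
    by_cases hy : x + y ∈ s <;>
      simp [Set.indicator_apply, hy, Set.mem_preimage]
  simp_rw [← hf, ← hg, step1]
  have hK : Measurable (fun p : ℝ × ℝ => s.indicator (fun w => g (w - p.1)) p.2) := by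
    have : (fun p : ℝ × ℝ => s.indicator (fun w => g (w - p.1)) p.2)
        = Set.indicator {p : ℝ × ℝ | p.2 ∈ s} (fun p => g (p.2 - p.1)) := by
      funext p
      by_cases hp : p.2 ∈ s <;> simp [Set.indicator_apply, hp]
    rw [this]
    exact Measurable.indicator (hgm.comp (measurable_snd.sub measurable_fst))
      (measurable_snd hs)
  rw [lintegral_withDensity_eq_lintegral_mul _ hfm
    (by exact hK.lintegral_prod_right')]
  simp only [Pi.mul_apply]
  have pull : ∀ x : ℝ, f x * (∫⁻ z, s.indicator (fun w => g (w - x)) z)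
      = ∫⁻ z, f x * s.indicator (fun w => g (w - x)) z := fun x =>
    (lintegral_const_mul (f x) (by exact hK.comp (measurable_prodMk_left))).symm
  simp_rw [pull]
  rw [lintegral_lintegral_swap
    (((hfm.comp measurable_fst).mul hK).aemeasurable)]
  have inner : ∀ z : ℝ, (∫⁻ x, f x * s.indicator (fun w => g (w - x)) z)
      = s.indicator (gaussianPDF 0 (v1 + v2)) z := by
    intro z
    by_cases hz : z ∈ s
    · simp only [Set.indicator_of_mem hz]
      have e1 : ∀ x, f x * g (z - x)
          = ENNReal.ofReal (gaussianPDFReal 0 v1 x * gaussianPDFReal 0 v2 (z - x)) := by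
        intro x
        rw [hf, hg]
        simp only [gaussianPDF]
        rw [ENNReal.ofReal_mul (gaussianPDFReal_nonneg _ _ _)]
      simp_rw [e1]
      rw [← ofReal_integral_eq_lintegral_ofReal (gauss_conv_integrable v1 v2 h1 h2 z)
            (Filter.Eventually.of_forall fun x =>
              mul_nonneg (gaussianPDFReal_nonneg _ _ _) (gaussianPDFReal_nonneg _ _ _)),
        gauss_conv_pdf v1 v2 h1 h2 z]
      rfl
    · simp [Set.indicator_of_notMem hz]
  simp_rw [inner]
  rw [lintegral_indicator hs]

lemma map_sum_pi_gaussian (v : ℝ≥0) :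
    ∀ (N : ℕ) (c : Fin N → ℝ),
    Measure.map (fun e : Fin N → ℝ => ∑ k, c k * e k)
        (Measure.pi fun _ : Fin N => gaussianReal 0 v)
      = gaussianReal 0 ((∑ k, (c k)^2).toNNReal * v) := by
  intro N
  induction N with
  | zero =>
    intro c
    have h0 : (∑ k : Fin 0, (c k)^2).toNNReal * v = 0 := by simp
    rw [h0, gaussianReal_zero_var]
    have : (fun e : Fin 0 → ℝ => ∑ k, c k * e k) = fun _ => (0:ℝ) := by
      funext e; simp
    rw [this, Measure.map_const]
    simp
  | succ N ih =>
    intro c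
    set T := MeasurableEquiv.piFinSuccAbove (fun _ : Fin (N+1) => ℝ) 0 with hT
    have key := measurePreserving_piFinSuccAbove (fun _ : Fin (N+1) => gaussianReal 0 v) 0
    set F : ℝ × (Fin N → ℝ) → ℝ :=
      fun q => c 0 * q.1 + ∑ j : Fin N, c (j.succ) * q.2 j with hF
    have hFm1 : Measurable (fun x : ℝ => c 0 * x) := measurable_id.const_mul _
    have hFm2 : Measurable (fun y : Fin N → ℝ => ∑ j : Fin N, c (j.succ) * y j) := by
      exact Finset.measurable_sum _ (fun j _ => (measurable_pi_apply j).const_mul _)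
    have hFm : Measurable F := (hFm1.comp measurable_fst).add (hFm2.comp measurable_snd)
    have hcomp : (fun e : Fin (N+1) → ℝ => ∑ k, c k * e k) = F ∘ T := by
      funext e
      simp only [hF, Function.comp_apply, hT, MeasurableEquiv.piFinSuccAbove_apply,
        Fin.sum_univ_succ, Fin.succAbove_zero]
      rfl
    rw [hcomp, ← Measure.map_map hFm T.measurable, key.map_eq]
    have hprodeq : Measure.map F
          ((gaussianReal 0 v).prod (Measure.pi fun _ : Fin N => gaussianReal 0 v))
        = Measure.conv
            (Measure.map (fun x : ℝ => c 0 * x) (gaussianReal 0 v))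
            (Measure.map (fun y : Fin N → ℝ => ∑ j : Fin N, c (j.succ) * y j)
              (Measure.pi fun _ : Fin N => gaussianReal 0 v)) := by
      rw [Measure.conv, Measure.map_prod_map _ _ hFm1 hFm2,
        Measure.map_map measurable_add (hFm1.prodMap hFm2)]
      rfl
    rw [hprodeq, ih (fun j => c j.succ)]
    have hmul : Measure.map (fun x : ℝ => c 0 * x) (gaussianReal 0 v)
        = gaussianReal 0 ((c 0 ^ 2).toNNReal * v) := by
      have h := gaussianReal_map_const_mul (μ := 0) (v := v) (c 0)
      simp only [mul_zero] at h
      convert h using 3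
      ext
      simp [Real.coe_toNNReal _ (sq_nonneg _)]
    rw [hmul, _root_.gaussianReal_conv_gaussianReal]
    congr 1
    ext
    push_cast
    rw [Real.coe_toNNReal _ (sq_nonneg (c 0)),
      Real.coe_toNNReal _ (Finset.sum_nonneg fun (j : Fin N) _ => sq_nonneg (c j.succ)),
      Real.coe_toNNReal _ (Finset.sum_nonneg fun (k : Fin (N+1)) _ => sq_nonneg (c k)),
      Fin.sum_univ_succ]
    ring

lemma lassoA {n p : ℕ} (hn : 0 < n) (X : Matrix (Fin n) (Fin p) ℝ)
    (hX : ∀ j, ∑ k, (X k j) ^ 2 = (n : ℝ)) (lamL : ℝ) (hl : 0 < lamL)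
    (y : Fin n → ℝ) (b : Fin p → ℝ)
    (hb : ∀ β : Fin p → ℝ,
      (1 / (2 * (n : ℝ))) * (∑ k, (y k - X.mulVec b k) ^ 2) + lamL * ∑ i, |b i|
        ≤ (1 / (2 * (n : ℝ))) * (∑ k, (y k - X.mulVec β k) ^ 2) + lamL * ∑ i, |β i|)
    (j : Fin p) : |∑ k, X k j * (y k - X.mulVec b k)| ≤ n * lamL := by
  have hn' : (0:ℝ) < n := by exact_mod_cast hn
  have h2n : (0:ℝ) < 2*n := by linarith
  set r : Fin n → ℝ := fun k => y k - X.mulVec b k with hr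
  set g : ℝ := ∑ k, X k j * r k with hg
  have key : ∀ t : ℝ, 0 ≤ -2*(t*g) + t^2*n + 2*n*lamL*|t| := by
    intro t
    set βt : Fin p → ℝ := b + t • (Pi.single j 1 : Fin p → ℝ) with hβt
    have hβ := hb βt
    have hmv : ∀ k, X.mulVec (βt) k = X.mulVec b k + t * X k j := by
      intro k
      rw [Matrix.mulVec_add, Matrix.mulVec_smul]
      simp [Matrix.mulVec_single, mul_comm]
    have hquad : ∑ k, (y k - X.mulVec (βt) k) ^ 2
        = (∑ k, r k ^ 2) - 2*(t*g) + t^2*n := by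
      have h1 : ∀ k, (y k - X.mulVec (βt) k) ^ 2
          = r k ^ 2 - 2*(t*(X k j * r k)) + t^2 * (X k j)^2 := by
        intro k; rw [hmv k]; simp only [hr]; ring
      rw [Finset.sum_congr rfl fun k _ => h1 k, Finset.sum_add_distrib,
        Finset.sum_sub_distrib, ← Finset.mul_sum, ← Finset.mul_sum, ← Finset.mul_sum, hX j]
    have habs : ∑ i, |(βt) i| ≤ (∑ i, |b i|) + |t| := by
      have h1 : ∀ i, |(βt) i| ≤ |b i| + |t| * (Pi.single j (1:ℝ) : Fin p → ℝ) i := by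
        intro i
        by_cases hij : i = j
        · subst hij; simp [hβt, abs_add_le]
        · simp [hβt, Pi.single_eq_of_ne hij]
      calc ∑ i, |(βt) i| ≤ ∑ i, (|b i| + |t| * (Pi.single j (1:ℝ) : Fin p → ℝ) i) :=
            Finset.sum_le_sum fun i _ => h1 i
        _ = (∑ i, |b i|) + |t| := by
            rw [Finset.sum_add_distrib, ← Finset.mul_sum]
            simp
    rw [hquad] at hβ
    have h := mul_le_mul_of_nonneg_left hβ h2n.le
    set Q : ℝ := ∑ k, r k ^ 2 with hQ
    set Sb : ℝ := ∑ i, |b i| with hSb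
    set Sβ : ℝ := ∑ i, |(βt) i| with hSβ
    have e1 : (2*(n:ℝ)) * ((1 / (2 * (n : ℝ))) * Q + lamL * Sb) = Q + 2*n*lamL*Sb := by
      field_simp
    have e2 : (2*(n:ℝ)) * ((1 / (2 * (n : ℝ))) * (Q - 2*(t*g) + t^2*n) + lamL * Sβ)
        = Q - 2*(t*g) + t^2*n + 2*n*lamL*Sβ := by
      field_simp
    rw [e1, e2] at h
    have h3 := mul_le_mul_of_nonneg_left habs (by positivity : (0:ℝ) ≤ 2*n*lamL)
    nlinarith [h, h3]
  refine le_of_forall_pos_le_add fun ε hε => ?_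
  have hs : (0:ℝ) < 2*ε/n := by positivity
  set s : ℝ := 2*ε/n with hsdef
  have hns : (n:ℝ) * s = 2*ε := by rw [hsdef]; field_simp
  have hts : ∃ t : ℝ, t*g = s*|g| ∧ |t| = s := by
    by_cases hgs : 0 ≤ g
    · exact ⟨s, by rw [abs_of_nonneg hgs], abs_of_nonneg hs.le⟩
    · exact ⟨-s, by rw [abs_of_neg (not_le.1 hgs)]; ring, by rw [abs_neg, abs_of_nonneg hs.le]⟩
  obtain ⟨t, ht1, ht2⟩ := hts
  have hkey := key t
  rw [ht1, ht2] at hkey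
  have ht2' : t^2 = s^2 := by rw [← sq_abs t, ht2]
  rw [ht2'] at hkey
  have h5 : 2*s*|g| ≤ 2*s*(n*lamL + ε) := by nlinarith [hkey, hns]
  have h6 : (0:ℝ) < 2*s := by linarith
  exact le_of_mul_le_mul_left h5 h6

lemma lassoB {n p : ℕ} (hn : 0 < n) (X : Matrix (Fin n) (Fin p) ℝ)
    (lamL : ℝ) (hl : 0 < lamL) (y : Fin n → ℝ) (b : Fin p → ℝ)
    (hb : ∀ β : Fin p → ℝ,
      (1 / (2 * (n : ℝ))) * (∑ k, (y k - X.mulVec b k) ^ 2) + lamL * ∑ i, |b i|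
        ≤ (1 / (2 * (n : ℝ))) * (∑ k, (y k - X.mulVec β k) ^ 2) + lamL * ∑ i, |β i|) :
    (n:ℝ) * lamL * ∑ i, |b i| ≤ ∑ i, b i * (∑ k, X k i * (y k - X.mulVec b k)) := by
  have hn' : (0:ℝ) < n := by exact_mod_cast hn
  have h2n : (0:ℝ) < 2*n := by linarith
  set r : Fin n → ℝ := fun k => y k - X.mulVec b k with hr
  set D : ℝ := ∑ k, X.mulVec b k * r k with hD
  set W : ℝ := ∑ k, (X.mulVec b k)^2 with hW
  have hW0 : 0 ≤ W := Finset.sum_nonneg fun k _ => sq_nonneg _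
  set Sb : ℝ := ∑ i, |b i| with hSb
  have hswap : ∑ i, b i * (∑ k, X k i * r k) = D := by
    rw [hD]
    simp only [Matrix.mulVec, dotProduct, Finset.sum_mul, Finset.mul_sum]
    rw [Finset.sum_comm]
    exact Finset.sum_congr rfl fun i _ => Finset.sum_congr rfl fun k _ => by ring
  rw [hswap]
  have key : ∀ t : ℝ, 0 ≤ t → t ≤ 1 → 2*(n:ℝ)*lamL*(t*Sb) ≤ 2*(t*D) + t^2*W := by
    intro t ht0 ht1
    set βt : Fin p → ℝ := (1-t) • b with hβt
    have hβ := hb βt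
    have hmv : ∀ k, X.mulVec βt k = (1-t) * X.mulVec b k := by
      intro k
      rw [hβt, Matrix.mulVec_smul]
      simp
    have hquad : ∑ k, (y k - X.mulVec βt k) ^ 2
        = (∑ k, r k ^ 2) + 2*(t*D) + t^2*W := by
      have h1 : ∀ k, (y k - X.mulVec βt k) ^ 2
          = r k ^ 2 + 2*(t*(X.mulVec b k * r k)) + t^2 * (X.mulVec b k)^2 := by
        intro k; rw [hmv k]; simp only [hr]; ring
      rw [Finset.sum_congr rfl fun k _ => h1 k, Finset.sum_add_distrib,
        Finset.sum_add_distrib, ← Finset.mul_sum, ← Finset.mul_sum, ← Finset.mul_sum]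
    have habs : ∑ i, |βt i| = (1-t) * Sb := by
      rw [hβt, hSb, Finset.mul_sum]
      refine Finset.sum_congr rfl fun i _ => ?_
      simp only [Pi.smul_apply, smul_eq_mul, abs_mul]
      rw [abs_of_nonneg (by linarith : (0:ℝ) ≤ 1 - t)]
    rw [hquad, habs] at hβ
    have h := mul_le_mul_of_nonneg_left hβ h2n.le
    set Q : ℝ := ∑ k, r k ^ 2 with hQ
    have e1 : (2*(n:ℝ)) * ((1 / (2 * (n : ℝ))) * Q + lamL * Sb) = Q + 2*n*lamL*Sb := by
      field_simp
    have e2 : (2*(n:ℝ)) * ((1 / (2 * (n : ℝ))) * (Q + 2*(t*D) + t^2*W) + lamL * ((1-t) * Sb))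
        = Q + 2*(t*D) + t^2*W + 2*n*lamL*Sb - 2*n*lamL*(t*Sb) := by
      field_simp; ring
    rw [e1, e2] at h
    linarith
  refine le_of_forall_pos_le_add fun ε hε => ?_
  set t : ℝ := min 1 (2*ε/(W+1)) with htdef
  have ht0 : 0 < t := lt_min one_pos (by positivity)
  have ht1 : t ≤ 1 := min_le_left _ _
  have ht3 : t * (W+1) ≤ 2*ε := by
    have h4 : t ≤ 2*ε/(W+1) := min_le_right _ _
    calc t * (W+1) ≤ (2*ε/(W+1)) * (W+1) := by
          apply mul_le_mul_of_nonneg_right h4 (by linarith)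
      _ = 2*ε := by field_simp
  have ht4 : t * W ≤ 2*ε := by nlinarith
  have hkey := key t ht0.le ht1
  have h5 : 2*t*((n:ℝ)*lamL*Sb) ≤ 2*t*(D + ε) := by nlinarith [mul_le_mul_of_nonneg_left ht4 ht0.le]
  exact le_of_mul_le_mul_left h5 (by linarith)


/-- Bound on the probability that the Lasso equicorrelation set is empty:
in the model `y = Xβ₀ + ε` with `ε ∼ N(0, σ² Iₙ)` and normalized columns, if for
each noise realization `β̂ e` minimizes the Lasso objective, then
`P(E = ∅) ≤ Φ((λ_L − ‖Σₙ β₀‖_∞)/(σ/√n))`, where `Σₙ = XᵀX/n` and `E` is the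
equicorrelation set. -/
theorem stmt16 (n p : ℕ) (hn : 0 < n) (hp : 0 < p)
    (X : Matrix (Fin n) (Fin p) ℝ) (hX : ∀ j, ∑ k, (X k j) ^ 2 = (n : ℝ))
    (β0 : Fin p → ℝ) (σ : ℝ) (hσ : 0 < σ) (lamL : ℝ) (hl : 0 < lamL)
    (βh : (Fin n → ℝ) → (Fin p → ℝ))
    (hmin : ∀ e : Fin n → ℝ, ∀ β : Fin p → ℝ,
      (1 / (2 * (n : ℝ))) * (∑ k, ((X.mulVec β0 + e) k - X.mulVec (βh e) k) ^ 2)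
          + lamL * ∑ i, |βh e i|
        ≤ (1 / (2 * (n : ℝ))) * (∑ k, ((X.mulVec β0 + e) k - X.mulVec β k) ^ 2)
          + lamL * ∑ i, |β i|) :
    (Measure.pi fun _ : Fin n => gaussianReal 0 ⟨σ ^ 2, sq_nonneg σ⟩)
        {e : Fin n → ℝ | ∀ j : Fin p,
          |∑ k, X k j * ((X.mulVec β0 + e) k - X.mulVec (βh e) k)| / n ≠ lamL}
      ≤ ENNReal.ofReal
          ((gaussianReal 0 1 (Set.Iic
            ((lamL - ⨆ j : Fin p, |((1 / (n : ℝ)) • ((Xᵀ * X).mulVec β0)) j|)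
              / (σ / Real.sqrt n)))).toReal) := by
  have hn' : (0:ℝ) < n := by exact_mod_cast hn
  have : Nonempty (Fin p) := ⟨⟨0, hp⟩⟩
  set m : Fin p → ℝ := (1 / (n : ℝ)) • ((Xᵀ * X).mulVec β0) with hm
  obtain ⟨js, _, hjs⟩ := Finset.exists_max_image Finset.univ (fun j => |m j|)
    Finset.univ_nonempty
  have hsup : (⨆ j, |m j|) = |m js| :=
    le_antisymm (ciSup_le fun j => hjs j (Finset.mem_univ j))
      (le_ciSup (f := fun j => |m j|) (Set.Finite.bddAbove (Set.finite_range _)) js)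
  set M : ℝ := (Xᵀ * X).mulVec β0 js with hMdef
  have hmjs : m js = (1/(n:ℝ)) * M := rfl
  have hM : (∑ k, X k js * X.mulVec β0 k) = M := by
    rw [hMdef]
    simp only [Matrix.mulVec, dotProduct, Matrix.mul_apply, Matrix.transpose_apply,
      Finset.sum_mul, Finset.mul_sum]
    rw [Finset.sum_comm]
    exact Finset.sum_congr rfl fun k _ => Finset.sum_congr rfl fun l _ => by ring
  set sg : ℝ := if 0 ≤ M then 1 else -1 with hsg
  set c : Fin n → ℝ := fun k => sg * X k js with hc
  have hsg2 : sg^2 = 1 := by rw [hsg]; split_ifs <;> norm_num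
  have hc2 : ∑ k, (c k)^2 = (n:ℝ) := by
    simp only [hc, mul_pow, hsg2, one_mul]
    exact hX js
  set t0 : ℝ := (n:ℝ) * lamL - |M| with ht0
  have hincl : {e : Fin n → ℝ | ∀ j : Fin p,
        |∑ k, X k j * ((X.mulVec β0 + e) k - X.mulVec (βh e) k)| / n ≠ lamL}
      ⊆ (fun e : Fin n → ℝ => ∑ k, c k * e k) ⁻¹' (Set.Iic t0) := by
    intro e he
    simp only [Set.mem_setOf_eq] at he
    have hA : ∀ j, |∑ k, X k j * ((X.mulVec β0 + e) k - X.mulVec (βh e) k)| ≤ n * lamL :=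
      lassoA hn X hX lamL hl (X.mulVec β0 + e) (βh e) (hmin e)
    have hne : ∀ j, |∑ k, X k j * ((X.mulVec β0 + e) k - X.mulVec (βh e) k)| ≠ (n:ℝ) * lamL := by
      intro j hEq
      exact he j (by rw [hEq, mul_comm, mul_div_assoc, div_self hn'.ne', mul_one])
    have hlt : ∀ j, |∑ k, X k j * ((X.mulVec β0 + e) k - X.mulVec (βh e) k)| < (n:ℝ) * lamL :=
      fun j => (hA j).lt_of_ne (hne j)
    have hB := lassoB hn X lamL hl (X.mulVec β0 + e) (βh e) (hmin e)
    have hb0 : ∀ i, βh e i = 0 := by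
      by_contra hcon
      push_neg at hcon
      obtain ⟨i0, hi0⟩ := hcon
      have h1 : ∑ i, βh e i * (∑ k, X k i * ((X.mulVec β0 + e) k - X.mulVec (βh e) k))
          < ∑ i, |βh e i| * ((n:ℝ)*lamL) := by
        refine Finset.sum_lt_sum (fun i _ => ?_) ⟨i0, Finset.mem_univ i0, ?_⟩
        · calc βh e i * (∑ k, X k i * ((X.mulVec β0 + e) k - X.mulVec (βh e) k))
              ≤ |βh e i * (∑ k, X k i * ((X.mulVec β0 + e) k - X.mulVec (βh e) k))| :=
                le_abs_self _
            _ = |βh e i| * |∑ k, X k i * ((X.mulVec β0 + e) k - X.mulVec (βh e) k)| :=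
                abs_mul _ _
            _ ≤ |βh e i| * ((n:ℝ)*lamL) :=
                mul_le_mul_of_nonneg_left (hA i) (abs_nonneg _)
        · calc βh e i0 * (∑ k, X k i0 * ((X.mulVec β0 + e) k - X.mulVec (βh e) k))
              ≤ |βh e i0| * |∑ k, X k i0 * ((X.mulVec β0 + e) k - X.mulVec (βh e) k)| := by
                rw [← abs_mul]; exact le_abs_self _
            _ < |βh e i0| * ((n:ℝ)*lamL) :=
                mul_lt_mul_of_pos_left (hlt i0) (abs_pos.2 hi0)
      have h2 : ∑ i, |βh e i| * ((n:ℝ)*lamL) = (n:ℝ)*lamL*∑ i, |βh e i| := by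
        rw [← Finset.sum_mul]; ring
      rw [h2] at h1
      linarith
    have hmv0 : ∀ k, X.mulVec (βh e) k = 0 := by
      intro k
      simp only [Matrix.mulVec, dotProduct]
      exact Finset.sum_eq_zero fun i _ => by rw [hb0 i, mul_zero]
    have hgy : ∑ k, X k js * ((X.mulVec β0 + e) k - X.mulVec (βh e) k)
        = M + ∑ k, X k js * e k := by
      rw [← hM, ← Finset.sum_add_distrib]
      refine Finset.sum_congr rfl fun k _ => ?_
      rw [hmv0 k, Pi.add_apply]
      ring
    have hAjs := hA js
    rw [hgy] at hAjs
    have habs2 := abs_le.1 hAjs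
    have hcZ : ∑ k, c k * e k = sg * (∑ k, X k js * e k) := by
      rw [Finset.mul_sum]
      exact Finset.sum_congr rfl fun k _ => by rw [hc]; ring
    simp only [Set.mem_preimage, Set.mem_Iic, hcZ, ht0]
    by_cases hMs : 0 ≤ M
    · rw [hsg, if_pos hMs, one_mul, abs_of_nonneg hMs]
      linarith [habs2.2]
    · rw [hsg, if_neg hMs, abs_of_neg (not_le.1 hMs)]
      linarith [habs2.1]
  have hmeas : Measurable (fun e : Fin n → ℝ => ∑ k, c k * e k) :=
    Finset.measurable_sum _ fun k _ => (measurable_pi_apply k).const_mul _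
  set P := Measure.pi fun _ : Fin n => gaussianReal 0 ⟨σ ^ 2, sq_nonneg σ⟩ with hP
  set cc : ℝ := σ * Real.sqrt n with hcc
  have hsqn : (0:ℝ) < Real.sqrt n := Real.sqrt_pos.2 hn'
  have hccpos : 0 < cc := by positivity
  have hvar : (NNReal.mk (cc^2) (sq_nonneg cc) * 1 : ℝ≥0)
      = ((∑ k, (c k)^2).toNNReal * NNReal.mk (σ^2) (sq_nonneg σ) : ℝ≥0) := by
    apply NNReal.coe_injective
    push_cast
    rw [Real.coe_toNNReal _ (by rw [hc2]; exact hn'.le), hc2, hcc]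
    rw [mul_pow, Real.sq_sqrt hn'.le]
    ring
  have hss : Real.sqrt (n:ℝ) * Real.sqrt n = n := Real.mul_self_sqrt hn'.le
  have hmm : |m js| = |M| / n := by
    rw [hmjs, abs_mul, abs_of_pos (by positivity : (0:ℝ) < 1/(n:ℝ))]
    ring
  have hfin : t0 / cc = (lamL - |m js|) / (σ / Real.sqrt n) := by
    rw [ht0, hmm, hcc]
    rw [div_eq_div_iff (by positivity) (by positivity)]
    field_simp
    ring_nf
    rw [Real.sq_sqrt hn'.le]
    ring
  calc P {e : Fin n → ℝ | ∀ j : Fin p,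
        |∑ k, X k j * ((X.mulVec β0 + e) k - X.mulVec (βh e) k)| / n ≠ lamL}
      ≤ P ((fun e : Fin n → ℝ => ∑ k, c k * e k) ⁻¹' (Set.Iic t0)) := measure_mono hincl
    _ = (Measure.map (fun e : Fin n → ℝ => ∑ k, c k * e k) P) (Set.Iic t0) :=
        (Measure.map_apply hmeas measurableSet_Iic).symm
    _ = gaussianReal 0 ((∑ k, (c k)^2).toNNReal * NNReal.mk (σ^2) (sq_nonneg σ)) (Set.Iic t0) := by
        rw [hP]; exact congrArg (fun μ => μ (Set.Iic t0)) (map_sum_pi_gaussian (NNReal.mk (σ^2) (sq_nonneg σ)) n c)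
    _ = ((gaussianReal 0 1).map (fun x : ℝ => cc * x)) (Set.Iic t0) := by
        rw [show ((fun x : ℝ => cc * x)) = ((cc * ·)) from rfl,
          gaussianReal_map_const_mul (μ := 0) (v := 1) cc, mul_zero, hvar]
    _ = gaussianReal 0 1 ((fun x : ℝ => cc * x) ⁻¹' (Set.Iic t0)) :=
        Measure.map_apply (measurable_id.const_mul cc) measurableSet_Iic
    _ = gaussianReal 0 1 (Set.Iic (t0 / cc)) := by
        congr 1
        ext x
        simp only [Set.mem_preimage, Set.mem_Iic]
        rw [← le_div_iff₀' hccpos]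
    _ = gaussianReal 0 1 (Set.Iic
          ((lamL - ⨆ j : Fin p, |m j|) / (σ / Real.sqrt n))) := by
        rw [hsup, hfin]
    _ = ENNReal.ofReal ((gaussianReal 0 1 (Set.Iic
          ((lamL - ⨆ j : Fin p, |m j|) / (σ / Real.sqrt n)))).toReal) :=
        (ENNReal.ofReal_toReal (measure_ne_top _ _)).symm
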